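/- (Sufficient conditions for an overdamped eigenvalue) Assume θ = 0. Let ζ ∈ ℂ with det C(ζ,β) = 0 (equivalently ζ ∈ σ(A(β))). Then Re ζ = 0 whenever either of the following holds: (i) −Im ζ ≥ ω_max; or (ii) η is invertible and |ζ| < ω_min, where ω_min = √(min σ(α⁻¹η)). -/

import Mathlib

open Matrix
open scoped ComplexOrder

noncomputable section

/-- The positive semidefinite square root of a positive semidefinite matrix
(restored with its Mathlib (Dec 2024) definition, since removed from Mathlib). -/
def Matrix.PosSemidef.sqrt {n 𝕜 : Type*} [Fintype n] [RCLike 𝕜] [DecidableEq n]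
    {A : Matrix n n 𝕜} (hA : A.PosSemidef) : Matrix n n 𝕜 :=
  hA.1.eigenvectorUnitary.1 * diagonal ((↑) ∘ (√·) ∘ hA.1.eigenvalues) *
  (star hA.1.eigenvectorUnitary : Matrix n n 𝕜)

variable {N : ℕ}

/-- A real matrix viewed as a complex matrix. -/
def cm (M : Matrix (Fin N) (Fin N) ℝ) : Matrix (Fin N) (Fin N) ℂ :=
  M.map Complex.ofReal

/-- The quadratic matrix pencil `C(ζ,β) = ζ²α + iζ(2θ + βR) − η`. -/
def pencil (α η θ R : Matrix (Fin N) (Fin N) ℝ) (β : ℝ) (ζ : ℂ) :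
    Matrix (Fin N) (Fin N) ℂ :=
  ζ ^ 2 • cm α + (Complex.I * ζ) • ((2 : ℂ) • cm θ + (β : ℂ) • cm R) - cm η

/-- `K_p = (√α)⁻¹`. -/
def Kp {α : Matrix (Fin N) (Fin N) ℝ} (hα : (cm α).PosDef) : Matrix (Fin N) (Fin N) ℂ :=
  (hα.posSemidef.sqrt)⁻¹

/-- `Φ = √η · K_p`. -/
def Phi {α η : Matrix (Fin N) (Fin N) ℝ} (hα : (cm α).PosDef) (hη : (cm η).PosSemidef) :
    Matrix (Fin N) (Fin N) ℂ :=
  hη.sqrt * Kp hα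

/-- `R̃ = K_p R K_p`. -/
def Rt (R : Matrix (Fin N) (Fin N) ℝ) {α : Matrix (Fin N) (Fin N) ℝ} (hα : (cm α).PosDef) :
    Matrix (Fin N) (Fin N) ℂ :=
  Kp hα * cm R * Kp hα

/-- `Ω_p = −2i K_p θ K_p`. -/
def Omp (θ : Matrix (Fin N) (Fin N) ℝ) {α : Matrix (Fin N) (Fin N) ℝ} (hα : (cm α).PosDef) :
    Matrix (Fin N) (Fin N) ℂ :=
  ((-2 : ℂ) * Complex.I) • (Kp hα * cm θ * Kp hα)

/-- `Ω = [[Ω_p, −iΦᵀ],[iΦ, 0]]`. -/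
def Om (θ : Matrix (Fin N) (Fin N) ℝ) {α η : Matrix (Fin N) (Fin N) ℝ}
    (hα : (cm α).PosDef) (hη : (cm η).PosSemidef) :
    Matrix (Fin N ⊕ Fin N) (Fin N ⊕ Fin N) ℂ :=
  fromBlocks (Omp θ hα) ((-Complex.I) • (Phi hα hη)ᵀ) (Complex.I • Phi hα hη) 0

/-- `B = [[R̃, 0],[0, 0]]`. -/
def Bm (R : Matrix (Fin N) (Fin N) ℝ) {α : Matrix (Fin N) (Fin N) ℝ} (hα : (cm α).PosDef) :
    Matrix (Fin N ⊕ Fin N) (Fin N ⊕ Fin N) ℂ :=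
  fromBlocks (Rt R hα) 0 0 0

/-- The system operator `A(β) = Ω − iβB`. -/
def Asys (θ R : Matrix (Fin N) (Fin N) ℝ) {α η : Matrix (Fin N) (Fin N) ℝ}
    (hα : (cm α).PosDef) (hη : (cm η).PosSemidef) (β : ℝ) :
    Matrix (Fin N ⊕ Fin N) (Fin N ⊕ Fin N) ℂ :=
  Om θ hα hη - (Complex.I * (β : ℂ)) • Bm R hα

/-- The ℓ²→ℓ² operator norm of a complex matrix. -/
def opN {n : Type*} [Fintype n] [DecidableEq n] (M : Matrix n n ℂ) : ℝ :=
  ‖Matrix.toEuclideanCLM (𝕜 := ℂ) M‖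

/-- `ω_max = ‖Ω‖`. -/
def omegaMax (θ : Matrix (Fin N) (Fin N) ℝ) {α η : Matrix (Fin N) (Fin N) ℝ}
    (hα : (cm α).PosDef) (hη : (cm η).PosSemidef) : ℝ :=
  opN (Om θ hα hη)

/-- `b_min`, the smallest nonzero eigenvalue of `B`. -/
def bMin (R : Matrix (Fin N) (Fin N) ℝ) {α : Matrix (Fin N) (Fin N) ℝ} (hα : (cm α).PosDef) : ℝ :=
  sInf {r : ℝ | r ≠ 0 ∧ (r : ℂ) ∈ spectrum ℂ (Bm R hα)}

/-! ### Auxiliary lemmas -/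

lemma psd_sqrt_conjTranspose {n 𝕜 : Type*} [Fintype n] [RCLike 𝕜] [DecidableEq n]
    {A : Matrix n n 𝕜} (hA : A.PosSemidef) : hA.sqrtᴴ = hA.sqrt := by
  rw [Matrix.PosSemidef.sqrt, conjTranspose_mul, conjTranspose_mul, diagonal_conjTranspose,
    ← Matrix.star_eq_conjTranspose, ← Matrix.star_eq_conjTranspose, star_star, Matrix.mul_assoc]
  have hd : star (((↑) ∘ (√·) ∘ hA.1.eigenvalues) : n → 𝕜) = ((↑) ∘ (√·) ∘ hA.1.eigenvalues) := by
    ext i; simp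
  rw [hd]

lemma psd_sqrt_mul_self {n 𝕜 : Type*} [Fintype n] [RCLike 𝕜] [DecidableEq n]
    {A : Matrix n n 𝕜} (hA : A.PosSemidef) : hA.sqrt * hA.sqrt = A := by
  have hU : (star hA.1.eigenvectorUnitary : Matrix n n 𝕜) * hA.1.eigenvectorUnitary.1 = 1 :=
    Unitary.coe_star_mul_self _
  rw [Matrix.PosSemidef.sqrt]
  calc _ = (hA.1.eigenvectorUnitary.1 * (diagonal ((↑) ∘ (√·) ∘ hA.1.eigenvalues) *
        ((star hA.1.eigenvectorUnitary : Matrix n n 𝕜) * hA.1.eigenvectorUnitary.1) *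
        diagonal ((↑) ∘ (√·) ∘ hA.1.eigenvalues))) *
        (star hA.1.eigenvectorUnitary : Matrix n n 𝕜) := by simp only [Matrix.mul_assoc]
    _ = _ := by
      rw [hU, Matrix.mul_one, diagonal_mul_diagonal]
      conv_rhs => rw [hA.1.spectral_theorem, Unitary.conjStarAlgAut_apply]
      congr 3
      ext i
      simp only [Function.comp_apply]
      rw [← RCLike.ofReal_mul, Real.mul_self_sqrt (hA.eigenvalues_nonneg i)]

section Aux

variable {n : Type*} [Fintype n] [DecidableEq n]

/-- Squared ℓ² norm of a vector, as a sum of `normSq` of entries. -/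
def sq2 (u : n → ℂ) : ℝ := ∑ i, Complex.normSq (u i)

lemma sq2_nonneg (u : n → ℂ) : 0 ≤ sq2 u :=
  Finset.sum_nonneg fun _ _ => Complex.normSq_nonneg _

lemma re_conj_mul (z : ℂ) (r : ℝ) : (starRingEnd ℂ z * ((r : ℂ) * z)).re = r * Complex.normSq z := by
  simp [Complex.normSq_apply, Complex.mul_re, Complex.mul_im]
  ring

lemma dot_star_self_re (u : n → ℂ) : (star u ⬝ᵥ u).re = sq2 u := by
  simp only [dotProduct, Complex.re_sum, sq2]
  refine Finset.sum_congr rfl fun i _ => ?_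
  simp [Complex.normSq_apply, Complex.mul_re]

lemma euclid_norm_sq (u : n → ℂ) : ‖(WithLp.equiv 2 (n → ℂ)).symm u‖ ^ 2 = sq2 u := by
  rw [EuclideanSpace.norm_eq, Real.sq_sqrt (by positivity)]
  simp only [WithLp.equiv_symm_apply, WithLp.ofLp_toLp, sq2, Complex.sq_norm]

lemma sq2_mulVec_le (M : Matrix n n ℂ) (u : n → ℂ) :
    sq2 (M *ᵥ u) ≤ opN M ^ 2 * sq2 u := by
  have h := (Matrix.toEuclideanCLM (𝕜 := ℂ) M).le_opNorm ((WithLp.equiv 2 (n → ℂ)).symm u)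
  change ‖(WithLp.equiv 2 (n → ℂ)).symm (M *ᵥ u)‖ ≤ _ at h
  have h2 := pow_le_pow_left₀ (norm_nonneg _) h 2
  rw [euclid_norm_sq, mul_pow, euclid_norm_sq] at h2
  exact h2

lemma conj_dot (S T : Matrix n n ℂ) (v : n → ℂ) :
    star (S *ᵥ v) ⬝ᵥ (T *ᵥ (S *ᵥ v)) = star v ⬝ᵥ ((Sᴴ * T * S) *ᵥ v) := by
  simp only [star_mulVec, dotProduct_mulVec, vecMul_vecMul, Matrix.mul_assoc]

lemma rayleigh_lower [Nonempty n] {T : Matrix n n ℂ} (hT : T.IsHermitian) (w : n → ℂ) :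
    sInf (Set.range hT.eigenvalues) * sq2 w ≤ (star w ⬝ᵥ (T *ᵥ w)).re := by
  set U : Matrix n n ℂ := ↑(hT.eigenvectorUnitary) with hU
  have hUU : U * star U = 1 := Matrix.mem_unitaryGroup_iff.mp hT.eigenvectorUnitary.2
  set c : n → ℂ := star U *ᵥ w with hc
  have hsc : star c = star w ᵥ* U := by
    rw [hc, star_mulVec]

    rw [← Matrix.star_eq_conjTranspose, star_star]
  have key : star w ⬝ᵥ (T *ᵥ w) =
      star c ⬝ᵥ ((diagonal (RCLike.ofReal ∘ hT.eigenvalues)) *ᵥ c) := by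
    conv_lhs => rw [hT.spectral_theorem, Unitary.conjStarAlgAut_apply]
    rw [← hU, ← Matrix.mulVec_mulVec, ← Matrix.mulVec_mulVec, dotProduct_mulVec, ← hsc, hc]
  have hnorm : sq2 c = sq2 w := by
    have hd : star c ⬝ᵥ c = star w ⬝ᵥ w := by
      rw [hsc, hc, dotProduct_mulVec, vecMul_vecMul, hUU, vecMul_one]
    rw [← dot_star_self_re, ← dot_star_self_re, hd]
  have hsum : (star c ⬝ᵥ ((diagonal (RCLike.ofReal ∘ hT.eigenvalues)) *ᵥ c)).re
      = ∑ i, hT.eigenvalues i * Complex.normSq (c i) := by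
    simp only [dotProduct, Complex.re_sum]
    refine Finset.sum_congr rfl fun i _ => ?_
    rw [Matrix.mulVec_diagonal]
    exact re_conj_mul (c i) (hT.eigenvalues i)
  calc sInf (Set.range hT.eigenvalues) * sq2 w
      = ∑ i, sInf (Set.range hT.eigenvalues) * Complex.normSq (c i) := by
        rw [← hnorm, sq2, Finset.mul_sum]
    _ ≤ ∑ i, hT.eigenvalues i * Complex.normSq (c i) :=
        Finset.sum_le_sum fun i _ => mul_le_mul_of_nonneg_right
          (csInf_le (Set.finite_range _).bddBelow ⟨i, rfl⟩) (Complex.normSq_nonneg _)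
    _ = (star w ⬝ᵥ (T *ᵥ w)).re := by rw [key, hsum]

end Aux

lemma cm_zero {N : ℕ} : cm (0 : Matrix (Fin N) (Fin N) ℝ) = 0 := by
  ext i j; simp [cm]

lemma sq2_sum_elim {n m : Type*} [Fintype n] [Fintype m] (x : n → ℂ) (y : m → ℂ) :
    sq2 (Sum.elim x y) = sq2 x + sq2 y := by
  simp [sq2, Fintype.sum_sum_type]

set_option maxHeartbeats 2000000 in
/-- **Sufficient conditions for an overdamped eigenvalue** (`θ = 0`). If `det C(ζ,β) = 0`,
then `Re ζ = 0` whenever (i) `−Im ζ ≥ ω_max`, or (ii) `η` is invertible and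
`|ζ| < ω_min = √(min σ(α⁻¹η))`. -/
theorem overdamped_sufficient_conditions
    {N : ℕ} (hN : 1 ≤ N)
    (α η R : Matrix (Fin N) (Fin N) ℝ)
    (hα : (cm α).PosDef) (hη : (cm η).PosSemidef)
    (hR : (cm R).PosSemidef) (hR0 : R ≠ 0)
    (β : ℝ) (hβ : 0 ≤ β)
    (ζ : ℂ) (hdet : (pencil α η 0 R β ζ).det = 0) :
    (omegaMax 0 hα hη ≤ -ζ.im → ζ.re = 0) ∧
    (IsUnit (cm η) →
      ‖ζ‖ < Real.sqrt (sInf {r : ℝ | (r : ℂ) ∈ spectrum ℂ ((cm α)⁻¹ * cm η)}) →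
      ζ.re = 0) := by
  classical
  haveI : Nonempty (Fin N) := ⟨⟨0, hN⟩⟩
  obtain ⟨v, hv, hCv⟩ := (Matrix.exists_mulVec_eq_zero_iff).mpr hdet
  set S := hα.posSemidef.sqrt with hSdef
  have hSH : Sᴴ = S := psd_sqrt_conjTranspose hα.posSemidef
  have hSS : S * S = cm α := psd_sqrt_mul_self hα.posSemidef
  have hSdet : IsUnit S.det := by
    rw [isUnit_iff_ne_zero]
    intro h
    have : (cm α).det = 0 := by rw [← hSS, det_mul, h, mul_zero]
    exact hα.det_pos.ne' this
  have hKp : Kp hα = S⁻¹ := rfl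
  have hKpS : Kp hα * S = 1 := by rw [hKp]; exact Matrix.nonsing_inv_mul S hSdet
  have hSKp : S * Kp hα = 1 := by rw [hKp]; exact Matrix.mul_nonsing_inv S hSdet
  have hKpH : (Kp hα)ᴴ = Kp hα := by
    rw [hKp]; exact (Matrix.IsHermitian.inv hSH)
  -- the scalar quantities
  set A := star v ⬝ᵥ (cm α *ᵥ v) with hAdef
  set E := star v ⬝ᵥ (cm η *ᵥ v) with hEdef
  set Rq := star v ⬝ᵥ (cm R *ᵥ v) with hRqdef
  have hApos : 0 < A := hα.dotProduct_mulVec_pos hv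
  have hEpos : 0 ≤ E := hη.dotProduct_mulVec_nonneg v
  have hRqpos : 0 ≤ Rq := hR.dotProduct_mulVec_nonneg v
  rw [Complex.lt_def] at hApos
  rw [Complex.le_def] at hEpos hRqpos
  set a := A.re with hadef
  set e := E.re with hedef
  set r0 := Rq.re with hr0def
  have ha : 0 < a := by simpa using hApos.1
  have he : 0 ≤ e := by simpa using hEpos.1
  have hr0 : 0 ≤ r0 := by simpa using hRqpos.1
  clear_value a e r0
  have hAa : A = (a : ℂ) := Complex.ext (by rw [Complex.ofReal_re]; exact hadef.symm) (by simp [← hApos.2])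
  have hEe : E = (e : ℂ) := Complex.ext (by rw [Complex.ofReal_re]; exact hedef.symm) (by simp [← hEpos.2])
  have hRr : Rq = (r0 : ℂ) := Complex.ext (by rw [Complex.ofReal_re]; exact hr0def.symm) (by simp [← hRqpos.2])
  -- scalar equation
  have h0 : ζ ^ 2 * A + Complex.I * ζ * ((β : ℂ) * Rq) - E = 0 := by
    have := congrArg (fun M => star v ⬝ᵥ (M *ᵥ v)) (rfl : pencil α η 0 R β ζ = pencil α η 0 R β ζ)
    have h1 : star v ⬝ᵥ ((pencil α η 0 R β ζ) *ᵥ v) = 0 := by rw [hCv, dotProduct_zero]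
    unfold pencil at h1
    rw [cm_zero] at h1
    simpa [Matrix.add_mulVec, Matrix.sub_mulVec, Matrix.smul_mulVec,
      dotProduct_add, dotProduct_sub, dotProduct_smul, smul_eq_mul, mul_assoc,
      ← hAdef, ← hEdef, ← hRqdef, mul_comm, mul_left_comm] using h1
  rw [hAa, hEe, hRr] at h0
  set x := ζ.re with hxdef
  set y := ζ.im with hydef
  have him : x * (2 * y * a + β * r0) = 0 := by
    have := congrArg Complex.im h0
    simp only [Complex.add_im, Complex.sub_im, Complex.mul_im, Complex.mul_re,
      Complex.I_re, Complex.I_im, Complex.ofReal_re, Complex.ofReal_im, pow_two,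
      Complex.zero_im] at this
    nlinarith [this]
  have hre : (x ^ 2 - y ^ 2) * a - y * (β * r0) - e = 0 := by
    have := congrArg Complex.re h0
    simp only [Complex.add_re, Complex.sub_re, Complex.mul_re, Complex.mul_im,
      Complex.I_re, Complex.I_im, Complex.ofReal_re, Complex.ofReal_im, pow_two,
      Complex.zero_re] at this
    nlinarith [this]
  clear_value x y
  -- w and norm identities
  set w := S *ᵥ v with hwdef
  have haw : sq2 w = a := by
    have h1 : star w ⬝ᵥ w = A := by
      have := conj_dot S 1 v
      simpa [Matrix.one_mulVec, Matrix.mul_one, hSH, hSS, ← hAdef] using this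
    rw [← dot_star_self_re, h1]
    exact hadef.symm
  constructor
  · -- part (i)
    intro hω
    -- e ≤ ωmax^2 * a
    have hPS : Phi hα hη * S = hη.sqrt := by
      rw [Phi, Matrix.mul_assoc, hKpS, Matrix.mul_one]
    have hQv : hη.sqrt *ᵥ v = Phi hα hη *ᵥ w := by
      rw [hwdef, Matrix.mulVec_mulVec, hPS]
    have hEq : e = sq2 (Phi hα hη *ᵥ w) := by
      have h1 : star (hη.sqrt *ᵥ v) ⬝ᵥ (hη.sqrt *ᵥ v) = E := by
        have := conj_dot hη.sqrt 1 v
        simpa [Matrix.one_mulVec, psd_sqrt_conjTranspose hη, psd_sqrt_mul_self hη, ← hEdef] using this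
      rw [← hQv, ← dot_star_self_re, h1, hedef]
    -- block bound
    have hblock : sq2 (Phi hα hη *ᵥ w) ≤ (omegaMax 0 hα hη) ^ 2 * sq2 w := by
      have hOm0 : Omp (0 : Matrix (Fin N) (Fin N) ℝ) hα = 0 := by
        simp [Omp, cm_zero]
      have happ : (Om 0 hα hη) *ᵥ (Sum.elim w 0) =
          Sum.elim (0 : Fin N → ℂ) (Complex.I • (Phi hα hη *ᵥ w)) := by
        rw [Om, hOm0, fromBlocks_mulVec]
        have h1 : (Sum.elim w (0 : Fin N → ℂ)) ∘ Sum.inl = w := rfl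
        have h2 : (Sum.elim w (0 : Fin N → ℂ)) ∘ Sum.inr = 0 := rfl
        rw [h1, h2]
        simp [Matrix.smul_mulVec]
      have hb := sq2_mulVec_le (Om 0 hα hη) (Sum.elim w 0)
      rw [happ] at hb
      have h3 : sq2 (Sum.elim (0 : Fin N → ℂ) (Complex.I • (Phi hα hη *ᵥ w)))
          = sq2 (Phi hα hη *ᵥ w) := by
        rw [sq2_sum_elim]
        simp [sq2, Complex.normSq_mul]
      have h4 : sq2 (Sum.elim w (0 : Fin N → ℂ)) = sq2 w := by
        rw [sq2_sum_elim]; simp [sq2]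
      rw [h3, h4] at hb
      exact hb
    rw [← hEq, haw] at hblock
    -- arithmetic
    have hω0 : 0 ≤ omegaMax 0 hα hη := norm_nonneg _
    obtain ⟨om, hom⟩ : ∃ om, omegaMax 0 hα hη = om := ⟨_, rfl⟩
    rw [hom] at hω hω0 hblock
    by_contra hx
    have him' : 2 * y * a + β * r0 = 0 := by
      rcases mul_eq_zero.mp him with h | h
      · exact absurd h hx
      · exact h
    have hx2 : 0 < x ^ 2 := by positivity
    have hωy : om ^ 2 ≤ y ^ 2 := by
      have h := mul_le_mul hω hω hω0 (le_trans hω0 hω)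
      calc om ^ 2 = om * om := by ring
        _ ≤ (-y) * (-y) := h
        _ = y ^ 2 := by ring
    have hxy : (x ^ 2 + y ^ 2) * a = e := by linear_combination hre + y * him'
    linarith only [hblock, hxy, mul_pos ha hx2, mul_le_mul_of_nonneg_right hωy ha.le]
  · -- part (ii)
    intro hu habs
    have hTH : (Kp hα * cm η * Kp hα).IsHermitian := by
      show (Kp hα * cm η * Kp hα)ᴴ = Kp hα * cm η * Kp hα
      rw [conjTranspose_mul, conjTranspose_mul, hKpH, hη.1.eq]
      rw [Matrix.mul_assoc]
    have hconj : spectrum ℂ ((cm α)⁻¹ * cm η) = spectrum ℂ (Kp hα * cm η * Kp hα) := by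
      have hUnit : IsUnit S := (Matrix.isUnit_iff_isUnit_det S).mpr hSdet
      obtain ⟨uS, huS⟩ := hUnit
      have hinv : (↑uS⁻¹ : Matrix (Fin N) (Fin N) ℂ) = Kp hα := by
        rw [Matrix.coe_units_inv, huS, hKp]
      have hmat : S * ((cm α)⁻¹ * cm η) * Kp hα = Kp hα * cm η * Kp hα := by
        rw [← hSS, Matrix.mul_inv_rev, ← hKp]
        simp only [← Matrix.mul_assoc]
        rw [hSKp, Matrix.one_mul]
      have h1 := (spectrum.units_conjugate (R := ℂ) (a := (cm α)⁻¹ * cm η) (u := uS)).symm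
      rw [huS, hinv, hmat] at h1
      exact h1
    have hspec : {r : ℝ | (r : ℂ) ∈ spectrum ℂ ((cm α)⁻¹ * cm η)} = Set.range hTH.eigenvalues := by
      rw [hconj]
      ext r
      simp only [Set.mem_setOf_eq, ← Complex.coe_algebraMap, spectrum.algebraMap_mem_iff,
        hTH.spectrum_real_eq_range_eigenvalues]
    have hET : (star w ⬝ᵥ ((Kp hα * cm η * Kp hα) *ᵥ w)).re = e := by
      have h1 : star w ⬝ᵥ ((Kp hα * cm η * Kp hα) *ᵥ w) = E := by
        have hc := conj_dot S (Kp hα * cm η * Kp hα) v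
        have hmid : Sᴴ * (Kp hα * cm η * Kp hα) * S = cm η := by
          rw [hSH]
          have e1 : S * (Kp hα * cm η * Kp hα) * S = (S * Kp hα) * cm η * (Kp hα * S) := by
            simp only [Matrix.mul_assoc]
          rw [e1, hSKp, hKpS, Matrix.one_mul, Matrix.mul_one]
        rw [hc, hmid, ← hEdef]
      rw [h1, hedef]
    have hray := rayleigh_lower hTH w
    rw [hET, haw, ← hspec] at hray
    set lam := sInf {r : ℝ | (r : ℂ) ∈ spectrum ℂ ((cm α)⁻¹ * cm η)} with hlam
    have habs2 : x ^ 2 + y ^ 2 < lam := by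
      have := (Real.lt_sqrt (norm_nonneg ζ)).mp habs
      rwa [Complex.sq_norm, Complex.normSq_apply, ← pow_two, ← pow_two, ← hxdef, ← hydef] at this
    by_contra hx
    have him' : 2 * y * a + β * r0 = 0 := by
      rcases mul_eq_zero.mp him with h | h
      · exact absurd h hx
      · exact h
    have hx2 : 0 < x ^ 2 := by positivity
    have hxy : (x ^ 2 + y ^ 2) * a = e := by linear_combination hre + y * him'
    linarith only [hxy, hray, mul_lt_mul_of_pos_right habs2 ha]
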